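/- Let N ∈ {3,4}, let U_n be the truncated Aubin–Talenti bubbles, and set K'_N := ∫_{ℝ^N} U(x)^{2*} dx, where U(x) := A_N (1+|x|²)^{−(N−2)/2} is the full Aubin–Talenti bubble. Then there exists C > 0 such that for all integers n ≥ 1, |∫_{ℝ^N} U_n(x)^{2*} dx − K'_N| ≤ C · n^{−N}. -/

import Mathlib

open Real MeasureTheory

/-- The critical Sobolev exponent `2* = 2N/(N-2)`. -/
noncomputable def twoStar (N : ℕ) : ℝ := 2 * (N : ℝ) / ((N : ℝ) - 2)

/-- The radial profile of the truncated Aubin–Talenti bubble. -/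
noncomputable def bubbleProfile (N n : ℕ) (r : ℝ) : ℝ :=
  if r < 1 then
    ((N : ℝ) * ((N : ℝ) - 2)) ^ (((N : ℝ) - 2) / 4)
      * ((n : ℝ) / (1 + (n : ℝ) ^ 2 * r ^ 2)) ^ (((N : ℝ) - 2) / 2)
  else if r < 2 then
    ((N : ℝ) * ((N : ℝ) - 2)) ^ (((N : ℝ) - 2) / 4)
      * ((n : ℝ) / (1 + (n : ℝ) ^ 2)) ^ (((N : ℝ) - 2) / 2) * (2 - r)
  else 0

/-- The truncated Aubin–Talenti bubble `U_n` on `ℝ^N`. -/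
noncomputable def Ubub (N n : ℕ) (x : EuclideanSpace ℝ (Fin N)) : ℝ :=
  bubbleProfile N n ‖x‖

/-- The full Aubin–Talenti bubble `U(x) = A_N (1+|x|²)^{-(N-2)/2}` on `ℝ^N`. -/
noncomputable def Ufull (N : ℕ) (x : EuclideanSpace ℝ (Fin N)) : ℝ :=
  ((N : ℝ) * ((N : ℝ) - 2)) ^ (((N : ℝ) - 2) / 4)
    * (1 + ‖x‖ ^ 2) ^ (-(((N : ℝ) - 2) / 2))

namespace BubbleAux

/-- The normalizing constant `A_N`. -/
noncomputable def AN (N : ℕ) : ℝ := ((N : ℝ) * ((N : ℝ) - 2)) ^ (((N : ℝ) - 2) / 4)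

lemma AN_pos {N : ℕ} (h : 3 ≤ N) : 0 < AN N := by
  have h2 : (2 : ℝ) < (N : ℝ) := by exact_mod_cast by omega
  have : (0 : ℝ) < (N : ℝ) * ((N : ℝ) - 2) := by nlinarith
  exact Real.rpow_pos_of_pos this _

lemma prof_nonneg {N : ℕ} (hN : 3 ≤ N) (n : ℕ) (r : ℝ) : 0 ≤ bubbleProfile N n r := by
  have hA := (AN_pos hN).le
  unfold bubbleProfile
  rw [show ((N : ℝ) * ((N : ℝ) - 2)) ^ (((N : ℝ) - 2) / 4) = AN N from rfl]
  split_ifs with h1 h2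
  · exact mul_nonneg hA (Real.rpow_nonneg (by positivity) _)
  · have h2r : (0:ℝ) ≤ 2 - r := by linarith
    exact mul_nonneg (mul_nonneg hA (Real.rpow_nonneg (by positivity) _)) h2r
  · exact le_refl 0

lemma prof_zero (N n : ℕ) {r : ℝ} (h : 2 ≤ r) : bubbleProfile N n r = 0 := by
  unfold bubbleProfile
  rw [if_neg (by linarith), if_neg (by linarith)]

lemma prof_le {N n : ℕ} (hN : 3 ≤ N) (hn : 1 ≤ n) (r : ℝ) :
    bubbleProfile N n r ≤ AN N * (n : ℝ) ^ (((N : ℝ) - 2) / 2) := by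
  have hn0 : (0:ℝ) < (n:ℝ) := by exact_mod_cast hn
  have hA := AN_pos hN
  have hq : (0:ℝ) ≤ ((N : ℝ) - 2) / 2 := by
    have : (2:ℝ) ≤ (N:ℝ) := by exact_mod_cast by omega
    linarith
  unfold bubbleProfile
  rw [show ((N : ℝ) * ((N : ℝ) - 2)) ^ (((N : ℝ) - 2) / 4) = AN N from rfl]
  split_ifs with h1 h2
  · have hb : (n : ℝ) / (1 + (n : ℝ) ^ 2 * r ^ 2) ≤ (n : ℝ) := by
      rw [div_le_iff₀ (by positivity)]
      nlinarith [sq_nonneg ((n:ℝ) * r)]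
    exact mul_le_mul_of_nonneg_left
      (Real.rpow_le_rpow (by positivity) hb hq) hA.le
  · have hb : (n : ℝ) / (1 + (n : ℝ) ^ 2) ≤ (n : ℝ) := by
      rw [div_le_iff₀ (by positivity)]
      nlinarith
    have h2r : 2 - r ≤ 1 := by linarith
    have h2r0 : (0:ℝ) ≤ 2 - r := by linarith
    calc AN N * ((n : ℝ) / (1 + (n : ℝ) ^ 2)) ^ (((N : ℝ) - 2) / 2) * (2 - r)
        ≤ AN N * ((n : ℝ) / (1 + (n : ℝ) ^ 2)) ^ (((N : ℝ) - 2) / 2) * 1 := by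
          apply mul_le_mul_of_nonneg_left h2r (by positivity)
      _ = AN N * ((n : ℝ) / (1 + (n : ℝ) ^ 2)) ^ (((N : ℝ) - 2) / 2) := mul_one _
      _ ≤ AN N * (n : ℝ) ^ (((N : ℝ) - 2) / 2) :=
          mul_le_mul_of_nonneg_left (Real.rpow_le_rpow (by positivity) hb hq) hA.le
  · positivity

lemma prof_le_one {N n : ℕ} (hN : 3 ≤ N) (hn : 1 ≤ n) {r : ℝ} (hr : 1 ≤ r) :
    bubbleProfile N n r ≤ AN N * ((n : ℝ)⁻¹) ^ (((N : ℝ) - 2) / 2) := by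
  have hn0 : (0:ℝ) < (n:ℝ) := by exact_mod_cast hn
  have hn1 : (1:ℝ) ≤ (n:ℝ) := by exact_mod_cast hn
  have hA := AN_pos hN
  have hq : (0:ℝ) ≤ ((N : ℝ) - 2) / 2 := by
    have : (2:ℝ) ≤ (N:ℝ) := by exact_mod_cast by omega
    linarith
  unfold bubbleProfile
  rw [show ((N : ℝ) * ((N : ℝ) - 2)) ^ (((N : ℝ) - 2) / 4) = AN N from rfl]
  rw [if_neg (by linarith)]
  split_ifs with h2
  · have hb : (n : ℝ) / (1 + (n : ℝ) ^ 2) ≤ (n : ℝ)⁻¹ := by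
      rw [inv_eq_one_div, div_le_div_iff₀ (by positivity) hn0]
      nlinarith
    have h2r : 2 - r ≤ 1 := by linarith
    have h2r0 : (0:ℝ) ≤ 2 - r := by linarith
    calc AN N * ((n : ℝ) / (1 + (n : ℝ) ^ 2)) ^ (((N : ℝ) - 2) / 2) * (2 - r)
        ≤ AN N * ((n : ℝ) / (1 + (n : ℝ) ^ 2)) ^ (((N : ℝ) - 2) / 2) * 1 := by
          apply mul_le_mul_of_nonneg_left h2r (by positivity)
      _ = AN N * ((n : ℝ) / (1 + (n : ℝ) ^ 2)) ^ (((N : ℝ) - 2) / 2) := mul_one _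
      _ ≤ AN N * ((n : ℝ)⁻¹) ^ (((N : ℝ) - 2) / 2) :=
          mul_le_mul_of_nonneg_left (Real.rpow_le_rpow (by positivity) hb hq) hA.le
  · positivity

lemma prof_meas (N n : ℕ) : Measurable (bubbleProfile N n) := by
  unfold bubbleProfile
  apply Measurable.ite (measurableSet_lt measurable_id measurable_const)
  · fun_prop
  · apply Measurable.ite (measurableSet_lt measurable_id measurable_const)
    · fun_prop
    · fun_prop

lemma qp_eq {N : ℕ} (hN : 3 ≤ N) : (((N : ℝ) - 2) / 2) * twoStar N = (N : ℝ) := by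
  have h2 : (2 : ℝ) < (N : ℝ) := by exact_mod_cast by omega
  unfold twoStar
  rw [div_mul_div_comm, div_eq_iff (by nlinarith)]
  ring

lemma twoStar_pos {N : ℕ} (hN : 3 ≤ N) : 0 < twoStar N := by
  have h2 : (2 : ℝ) < (N : ℝ) := by exact_mod_cast by omega
  unfold twoStar
  apply div_pos (by linarith) (by linarith)

lemma gval {N : ℕ} (hN : 3 ≤ N) (x : EuclideanSpace ℝ (Fin N)) :
    Ufull N x ^ twoStar N = AN N ^ twoStar N * (1 + ‖x‖ ^ 2) ^ (-(N : ℝ)) := by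
  have h1 : (0:ℝ) ≤ 1 + ‖x‖ ^ 2 := by positivity
  unfold Ufull
  rw [show ((N : ℝ) * ((N : ℝ) - 2)) ^ (((N : ℝ) - 2) / 4) = AN N from rfl]
  rw [Real.mul_rpow (AN_pos hN).le (Real.rpow_nonneg h1 _), ← Real.rpow_mul h1]
  congr 1
  rw [neg_mul, qp_eq hN]

lemma scale {N n : ℕ} (hN : 3 ≤ N) (hn : 1 ≤ n) (x : EuclideanSpace ℝ (Fin N))
    (hx : ‖x‖ < 1) :
    Ubub N n x ^ twoStar N = (n : ℝ) ^ (N : ℕ) * Ufull N ((n : ℝ) • x) ^ twoStar N := by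
  have hn0 : (0:ℝ) < (n:ℝ) := by exact_mod_cast hn
  have hD : (0:ℝ) < 1 + (n : ℝ) ^ 2 * ‖x‖ ^ 2 := by positivity
  have ht0 : (0:ℝ) ≤ (n : ℝ) / (1 + (n : ℝ) ^ 2 * ‖x‖ ^ 2) := by positivity
  have hnorm : ‖(n : ℝ) • x‖ ^ 2 = (n : ℝ) ^ 2 * ‖x‖ ^ 2 := by
    rw [norm_smul, Real.norm_natCast, mul_pow]
  rw [gval hN, hnorm]
  unfold Ubub bubbleProfile
  rw [if_pos hx]
  rw [show ((N : ℝ) * ((N : ℝ) - 2)) ^ (((N : ℝ) - 2) / 4) = AN N from rfl]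
  rw [Real.mul_rpow (AN_pos hN).le (Real.rpow_nonneg ht0 _), ← Real.rpow_mul ht0,
    qp_eq hN, Real.div_rpow (le_of_lt hn0) hD.le, Real.rpow_neg hD.le,
    Real.rpow_natCast]
  field_simp

lemma Ubub_pow_nonneg {N : ℕ} (hN : 3 ≤ N) (n : ℕ) (x : EuclideanSpace ℝ (Fin N)) :
    0 ≤ Ubub N n x ^ twoStar N :=
  Real.rpow_nonneg (prof_nonneg hN n _) _

lemma Ufull_pow_nonneg {N : ℕ} (hN : 3 ≤ N) (x : EuclideanSpace ℝ (Fin N)) :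
    0 ≤ Ufull N x ^ twoStar N := by
  rw [gval hN]
  exact mul_nonneg (Real.rpow_nonneg (AN_pos hN).le _)
    (Real.rpow_nonneg (by positivity) _)

lemma f_integrable {N n : ℕ} (hN : 3 ≤ N) (hn : 1 ≤ n) :
    Integrable (fun x : EuclideanSpace ℝ (Fin N) => Ubub N n x ^ twoStar N) := by
  have hmeas : Measurable fun x : EuclideanSpace ℝ (Fin N) => Ubub N n x ^ twoStar N :=
    ((prof_meas N n).comp measurable_norm).pow measurable_const
  have hbound : Integrable ((Metric.closedBall (0 : EuclideanSpace ℝ (Fin N)) 2).indicator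
      fun _ => (AN N * (n : ℝ) ^ (((N : ℝ) - 2) / 2)) ^ twoStar N) :=
    (integrable_indicator_iff measurableSet_closedBall).2
      (integrableOn_const measure_closedBall_lt_top.ne)
  refine hbound.mono' hmeas.aestronglyMeasurable (Filter.Eventually.of_forall fun x => ?_)
  rw [Real.norm_eq_abs, abs_of_nonneg (Ubub_pow_nonneg hN n x)]
  by_cases hx : x ∈ Metric.closedBall (0 : EuclideanSpace ℝ (Fin N)) 2
  · rw [Set.indicator_of_mem hx]
    exact Real.rpow_le_rpow (prof_nonneg hN n _) (prof_le hN hn _) (twoStar_pos hN).le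
  · rw [Set.indicator_of_notMem hx]
    have h2 : 2 ≤ ‖x‖ := by
      rw [mem_closedBall_zero_iff] at hx
      linarith [not_le.mp hx]
    show bubbleProfile N n ‖x‖ ^ twoStar N ≤ 0
    rw [prof_zero N n h2, Real.zero_rpow (twoStar_pos hN).ne']

lemma g_integrable {N : ℕ} (hN : 3 ≤ N) :
    Integrable (fun x : EuclideanSpace ℝ (Fin N) => Ufull N x ^ twoStar N) := by
  have h2 : (Module.finrank ℝ (EuclideanSpace ℝ (Fin N)) : ℝ) < 2 * N := by
    rw [finrank_euclideanSpace_fin]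
    have : (3 : ℝ) ≤ (N : ℝ) := by exact_mod_cast hN
    linarith
  simp_rw [gval hN]
  have key := (integrable_rpow_neg_one_add_norm_sq (E := EuclideanSpace ℝ (Fin N))
    (μ := volume) h2).const_mul (AN N ^ twoStar N)
  have hexp : -(2 * (N : ℝ)) / 2 = -(N : ℝ) := by ring
  rw [hexp] at key
  exact key

/-- Auxiliary function dominating the tail of the bubble. -/
noncomputable def G (N : ℕ) : EuclideanSpace ℝ (Fin N) → ℝ :=
  Set.indicator {y | 1 ≤ ‖y‖} fun y => ‖y‖ ^ (-(2 * (N : ℝ)))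

lemma G_nonneg (N : ℕ) (y : EuclideanSpace ℝ (Fin N)) : 0 ≤ G N y := by
  unfold G
  exact Set.indicator_nonneg (fun y _ => Real.rpow_nonneg (norm_nonneg y) _) y

lemma G_meas (N : ℕ) : Measurable (G N) := by
  unfold G
  exact Measurable.indicator (by fun_prop)
    (measurableSet_le measurable_const measurable_norm)

lemma G_integrable {N : ℕ} (hN : 3 ≤ N) : Integrable (G N) := by
  have h2 : (Module.finrank ℝ (EuclideanSpace ℝ (Fin N)) : ℝ) < 2 * N := by
    rw [finrank_euclideanSpace_fin]
    have : (3 : ℝ) ≤ (N : ℝ) := by exact_mod_cast hN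
    linarith
  refine ((integrable_one_add_norm h2).const_mul ((2 : ℝ) ^ (2 * (N : ℝ)))).mono'
    (G_meas N).aestronglyMeasurable (Filter.Eventually.of_forall fun y => ?_)
  rw [Real.norm_eq_abs, abs_of_nonneg (G_nonneg N y)]
  by_cases hy : y ∈ {y : EuclideanSpace ℝ (Fin N) | 1 ≤ ‖y‖}
  · have hy1 : (1 : ℝ) ≤ ‖y‖ := hy
    unfold G
    rw [Set.indicator_of_mem hy]
    have key : ‖y‖ ^ (-(2 * (N : ℝ))) ≤ ((1 + ‖y‖) / 2) ^ (-(2 * (N : ℝ))) := by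
      apply Real.rpow_le_rpow_of_nonpos (by linarith) (by linarith)
      have : (0 : ℝ) ≤ 2 * (N : ℝ) := by positivity
      linarith
    refine key.trans (le_of_eq ?_)
    rw [Real.div_rpow (by linarith) (by norm_num), Real.rpow_neg (by norm_num : (0:ℝ) ≤ 2),
      div_inv_eq_mul, mul_comm]
  · unfold G
    rw [Set.indicator_of_notMem hy]
    positivity

end BubbleAux

theorem stmt_9 (N : ℕ) (hN : N = 3 ∨ N = 4) :
    ∃ C : ℝ, 0 < C ∧ ∀ n : ℕ, 1 ≤ n →
      |(∫ x : EuclideanSpace ℝ (Fin N), (Ubub N n x) ^ (twoStar N))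
          - ∫ x : EuclideanSpace ℝ (Fin N), (Ufull N x) ^ (twoStar N)|
        ≤ C * (n : ℝ) ^ (-(N : ℝ)) := by
  classical
  have hN3 : 3 ≤ N := by rcases hN with h | h <;> omega
  have hA := BubbleAux.AN_pos hN3
  have hp := BubbleAux.twoStar_pos hN3
  have hAp : 0 < BubbleAux.AN N ^ twoStar N := Real.rpow_pos_of_pos hA _
  set V : ℝ := (volume (Metric.closedBall (0 : EuclideanSpace ℝ (Fin N)) 2)).toReal with hVdef
  set IG : ℝ := ∫ y : EuclideanSpace ℝ (Fin N), BubbleAux.G N y with hIGdef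
  have hV0 : 0 ≤ V := ENNReal.toReal_nonneg
  have hIG0 : 0 ≤ IG := integral_nonneg (BubbleAux.G_nonneg N)
  refine ⟨BubbleAux.AN N ^ twoStar N * V + BubbleAux.AN N ^ twoStar N * IG + 1, by nlinarith, ?_⟩
  intro n hn
  have hn0R : (0 : ℝ) < (n : ℝ) := by exact_mod_cast hn
  have ht : (0 : ℝ) < (n : ℝ) ^ (-(N : ℝ)) := Real.rpow_pos_of_pos hn0R _
  have hfint : Integrable (fun x : EuclideanSpace ℝ (Fin N) => Ubub N n x ^ twoStar N) :=
    BubbleAux.f_integrable hN3 hn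
  have hgint : Integrable (fun x : EuclideanSpace ℝ (Fin N) => Ufull N x ^ twoStar N) :=
    BubbleAux.g_integrable hN3
  set B1 := Metric.ball (0 : EuclideanSpace ℝ (Fin N)) 1 with hB1def
  set Bn := Metric.ball (0 : EuclideanSpace ℝ (Fin N)) (n : ℝ) with hBndef
  -- Step 1: the integral over the unit ball equals the integral of the full bubble over `ball 0 n`
  have hpt : ∀ x : EuclideanSpace ℝ (Fin N),
      B1.indicator (fun x => Ubub N n x ^ twoStar N) x
        = (n : ℝ) ^ (N : ℕ)
          * (Bn.indicator (fun x => Ufull N x ^ twoStar N)) ((n : ℝ) • x) := by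
    intro x
    by_cases hx : ‖x‖ < 1
    · have hx1 : x ∈ B1 := mem_ball_zero_iff.2 hx
      have hx2 : (n : ℝ) • x ∈ Bn := by
        rw [hBndef, mem_ball_zero_iff, norm_smul, Real.norm_natCast]
        calc (n : ℝ) * ‖x‖ < (n : ℝ) * 1 := by exact mul_lt_mul_of_pos_left hx hn0R
          _ = (n : ℝ) := mul_one _
      rw [Set.indicator_of_mem hx1, Set.indicator_of_mem hx2]
      exact BubbleAux.scale hN3 hn x hx
    · have hx1 : x ∉ B1 := fun h => hx (mem_ball_zero_iff.1 h)
      have hx2 : (n : ℝ) • x ∉ Bn := by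
        rw [hBndef, mem_ball_zero_iff, norm_smul, Real.norm_natCast]
        push_neg at hx ⊢
        calc (n : ℝ) = (n : ℝ) * 1 := (mul_one _).symm
          _ ≤ (n : ℝ) * ‖x‖ := by exact mul_le_mul_of_nonneg_left hx hn0R.le
      rw [Set.indicator_of_notMem hx1, Set.indicator_of_notMem hx2, mul_zero]
  have hball : (∫ x in B1, Ubub N n x ^ twoStar N) = ∫ x in Bn, Ufull N x ^ twoStar N := by
    rw [← integral_indicator measurableSet_ball,
      ← integral_indicator measurableSet_ball]
    calc (∫ x, B1.indicator (fun x => Ubub N n x ^ twoStar N) x)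
        = ∫ x, (n : ℝ) ^ (N : ℕ)
            * (Bn.indicator (fun x => Ufull N x ^ twoStar N)) ((n : ℝ) • x) :=
          integral_congr_ae (Filter.Eventually.of_forall hpt)
      _ = (n : ℝ) ^ (N : ℕ)
            * ∫ x, (Bn.indicator (fun x => Ufull N x ^ twoStar N)) ((n : ℝ) • x) :=
          integral_const_mul _ _
      _ = (n : ℝ) ^ (N : ℕ)
            * (((n : ℝ) ^ Module.finrank ℝ (EuclideanSpace ℝ (Fin N)))⁻¹
              • ∫ x, (Bn.indicator (fun x => Ufull N x ^ twoStar N)) x) := by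
          rw [MeasureTheory.Measure.integral_comp_smul_of_nonneg volume
            (Bn.indicator (fun x => Ufull N x ^ twoStar N)) (n : ℝ) (hR := hn0R.le)]
      _ = ∫ x, (Bn.indicator (fun x => Ufull N x ^ twoStar N)) x := by
          rw [finrank_euclideanSpace_fin, smul_eq_mul]
          have hne : ((n : ℝ) ^ (N : ℕ)) ≠ 0 := by positivity
          field_simp
  -- Step 2: decomposition of the difference
  have h1 := integral_add_compl (s := B1) measurableSet_ball hfint
  have h2 := integral_add_compl (s := Bn) measurableSet_ball hgint
  have hdec : (∫ x : EuclideanSpace ℝ (Fin N), Ubub N n x ^ twoStar N)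
      - (∫ x : EuclideanSpace ℝ (Fin N), Ufull N x ^ twoStar N)
      = (∫ x in B1ᶜ, Ubub N n x ^ twoStar N) - ∫ x in Bnᶜ, Ufull N x ^ twoStar N := by
    rw [← h1, ← h2, hball]
    ring
  -- Step 3: nonnegativity of both error terms
  have ha0 : 0 ≤ ∫ x in B1ᶜ, Ubub N n x ^ twoStar N :=
    setIntegral_nonneg measurableSet_ball.compl
      fun x _ => BubbleAux.Ubub_pow_nonneg hN3 n x
  have hb0 : 0 ≤ ∫ x in Bnᶜ, Ufull N x ^ twoStar N :=
    setIntegral_nonneg measurableSet_ball.compl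
      fun x _ => BubbleAux.Ufull_pow_nonneg hN3 x
  -- Step 4: bound for the annulus term
  have hbound2 : Integrable ((Metric.closedBall (0 : EuclideanSpace ℝ (Fin N)) 2).indicator
      fun _ => BubbleAux.AN N ^ twoStar N * (n : ℝ) ^ (-(N : ℝ))) :=
    (integrable_indicator_iff measurableSet_closedBall).2
      (integrableOn_const measure_closedBall_lt_top.ne)
  have hptf : ∀ x : EuclideanSpace ℝ (Fin N),
      (B1ᶜ).indicator (fun x => Ubub N n x ^ twoStar N) x
        ≤ (Metric.closedBall (0 : EuclideanSpace ℝ (Fin N)) 2).indicator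
            (fun _ => BubbleAux.AN N ^ twoStar N * (n : ℝ) ^ (-(N : ℝ))) x := by
    intro x
    by_cases hx1 : x ∈ B1
    · rw [Set.indicator_of_notMem (Set.notMem_compl_iff.2 hx1)]
      exact Set.indicator_nonneg (fun _ _ => by positivity) x
    · rw [Set.indicator_of_mem (Set.mem_compl hx1)]
      have hr1 : 1 ≤ ‖x‖ := by
        rw [hB1def, mem_ball_zero_iff, not_lt] at hx1
        exact hx1
      by_cases hx2 : x ∈ Metric.closedBall (0 : EuclideanSpace ℝ (Fin N)) 2
      · rw [Set.indicator_of_mem hx2]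
        have hle1 : Ubub N n x ^ twoStar N
            ≤ (BubbleAux.AN N * ((n : ℝ)⁻¹) ^ (((N : ℝ) - 2) / 2)) ^ twoStar N :=
          Real.rpow_le_rpow (BubbleAux.prof_nonneg hN3 n _)
            (BubbleAux.prof_le_one hN3 hn hr1) hp.le
        have heq : (BubbleAux.AN N * ((n : ℝ)⁻¹) ^ (((N : ℝ) - 2) / 2)) ^ twoStar N
            = BubbleAux.AN N ^ twoStar N * (n : ℝ) ^ (-(N : ℝ)) := by
          rw [Real.mul_rpow hA.le (Real.rpow_nonneg (inv_nonneg.2 hn0R.le) _),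
            ← Real.rpow_mul (inv_nonneg.2 hn0R.le), BubbleAux.qp_eq hN3,
            Real.inv_rpow hn0R.le, ← Real.rpow_neg hn0R.le]
        rw [← heq]
        exact hle1
      · rw [Set.indicator_of_notMem hx2]
        have h2 : 2 ≤ ‖x‖ := by
          rw [mem_closedBall_zero_iff, not_le] at hx2
          linarith
        show bubbleProfile N n ‖x‖ ^ twoStar N ≤ 0
        rw [BubbleAux.prof_zero N n h2, Real.zero_rpow hp.ne']
  have hT1 : (∫ x in B1ᶜ, Ubub N n x ^ twoStar N)
      ≤ BubbleAux.AN N ^ twoStar N * (n : ℝ) ^ (-(N : ℝ)) * V := by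
    rw [← integral_indicator measurableSet_ball.compl]
    calc (∫ x, (B1ᶜ).indicator (fun x => Ubub N n x ^ twoStar N) x)
        ≤ ∫ x, (Metric.closedBall (0 : EuclideanSpace ℝ (Fin N)) 2).indicator
            (fun _ => BubbleAux.AN N ^ twoStar N * (n : ℝ) ^ (-(N : ℝ))) x :=
          integral_mono (hfint.indicator measurableSet_ball.compl) hbound2 hptf
      _ = V • (BubbleAux.AN N ^ twoStar N * (n : ℝ) ^ (-(N : ℝ))) :=
          integral_indicator_const _ measurableSet_closedBall
      _ = BubbleAux.AN N ^ twoStar N * (n : ℝ) ^ (-(N : ℝ)) * V := by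
          rw [smul_eq_mul]; ring
  -- Step 5: bound for the tail term
  have hptg : ∀ x : EuclideanSpace ℝ (Fin N),
      (Bnᶜ).indicator (fun x => Ufull N x ^ twoStar N) x
        ≤ BubbleAux.AN N ^ twoStar N * (n : ℝ) ^ (-(2 * (N : ℝ)))
          * BubbleAux.G N ((n : ℝ)⁻¹ • x) := by
    intro x
    by_cases hx : x ∈ Bn
    · rw [Set.indicator_of_notMem (Set.notMem_compl_iff.2 hx)]
      exact mul_nonneg (mul_nonneg hAp.le (Real.rpow_nonneg hn0R.le _))
        (BubbleAux.G_nonneg N _)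
    · rw [Set.indicator_of_mem (Set.mem_compl hx)]
      have hrn : (n : ℝ) ≤ ‖x‖ := by
        rw [hBndef, mem_ball_zero_iff, not_lt] at hx
        exact hx
      have hxpos : (0 : ℝ) < ‖x‖ := lt_of_lt_of_le hn0R hrn
      have hr1 : (1 : ℝ) ≤ ‖(n : ℝ)⁻¹ • x‖ := by
        rw [norm_smul, norm_inv, Real.norm_natCast, inv_mul_eq_div, le_div_iff₀ hn0R]
        linarith
      have h1 : (1 + ‖x‖ ^ 2) ^ (-(N : ℝ)) ≤ (‖x‖ ^ 2) ^ (-(N : ℝ)) := by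
        apply Real.rpow_le_rpow_of_nonpos (by positivity) (by linarith)
        have : (0 : ℝ) ≤ (N : ℝ) := by positivity
        linarith
      have h2 : (‖x‖ ^ 2) ^ (-(N : ℝ)) = ‖x‖ ^ (-(2 * (N : ℝ))) := by
        rw [← Real.rpow_natCast ‖x‖ 2, ← Real.rpow_mul (norm_nonneg x)]
        congr 1
        push_cast
        ring
      have h3 : ‖x‖ ^ (-(2 * (N : ℝ)))
          = (n : ℝ) ^ (-(2 * (N : ℝ))) * ‖(n : ℝ)⁻¹ • x‖ ^ (-(2 * (N : ℝ))) := by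
        have hxx : ‖x‖ = (n : ℝ) * ‖(n : ℝ)⁻¹ • x‖ := by
          rw [norm_smul, norm_inv, Real.norm_natCast]
          field_simp
        rw [hxx, Real.mul_rpow hn0R.le (norm_nonneg _)]
      have hG : BubbleAux.G N ((n : ℝ)⁻¹ • x) = ‖(n : ℝ)⁻¹ • x‖ ^ (-(2 * (N : ℝ))) := by
        exact Set.indicator_of_mem
          (show ((n : ℝ)⁻¹ • x) ∈ {y : EuclideanSpace ℝ (Fin N) | 1 ≤ ‖y‖} from hr1) _
      calc Ufull N x ^ twoStar N
          = BubbleAux.AN N ^ twoStar N * (1 + ‖x‖ ^ 2) ^ (-(N : ℝ)) := BubbleAux.gval hN3 x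
        _ ≤ BubbleAux.AN N ^ twoStar N * ‖x‖ ^ (-(2 * (N : ℝ))) := by
            rw [← h2]
            exact mul_le_mul_of_nonneg_left h1 hAp.le
        _ = BubbleAux.AN N ^ twoStar N
            * ((n : ℝ) ^ (-(2 * (N : ℝ))) * ‖(n : ℝ)⁻¹ • x‖ ^ (-(2 * (N : ℝ)))) := by rw [h3]
        _ = BubbleAux.AN N ^ twoStar N * (n : ℝ) ^ (-(2 * (N : ℝ)))
            * BubbleAux.G N ((n : ℝ)⁻¹ • x) := by rw [hG]; ring
  have hint2 : Integrable (fun x : EuclideanSpace ℝ (Fin N) =>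
      BubbleAux.AN N ^ twoStar N * (n : ℝ) ^ (-(2 * (N : ℝ)))
        * BubbleAux.G N ((n : ℝ)⁻¹ • x)) :=
    ((BubbleAux.G_integrable hN3).comp_smul (inv_ne_zero hn0R.ne')).const_mul _
  have hT2 : (∫ x in Bnᶜ, Ufull N x ^ twoStar N)
      ≤ BubbleAux.AN N ^ twoStar N * (n : ℝ) ^ (-(N : ℝ)) * IG := by
    rw [← integral_indicator measurableSet_ball.compl]
    calc (∫ x, (Bnᶜ).indicator (fun x => Ufull N x ^ twoStar N) x)
        ≤ ∫ x : EuclideanSpace ℝ (Fin N),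
            BubbleAux.AN N ^ twoStar N * (n : ℝ) ^ (-(2 * (N : ℝ)))
              * BubbleAux.G N ((n : ℝ)⁻¹ • x) :=
          integral_mono (hgint.indicator measurableSet_ball.compl) hint2 hptg
      _ = BubbleAux.AN N ^ twoStar N * (n : ℝ) ^ (-(2 * (N : ℝ)))
            * ∫ x : EuclideanSpace ℝ (Fin N), BubbleAux.G N ((n : ℝ)⁻¹ • x) :=
          integral_const_mul _ _
      _ = BubbleAux.AN N ^ twoStar N * (n : ℝ) ^ (-(2 * (N : ℝ)))
            * ((n : ℝ) ^ Module.finrank ℝ (EuclideanSpace ℝ (Fin N)) • IG) := by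
          rw [MeasureTheory.Measure.integral_comp_inv_smul_of_nonneg volume
            (BubbleAux.G N) hn0R.le]
      _ = BubbleAux.AN N ^ twoStar N * (n : ℝ) ^ (-(N : ℝ)) * IG := by
          rw [finrank_euclideanSpace_fin, smul_eq_mul, ← Real.rpow_natCast (n : ℝ) N]
          rw [show BubbleAux.AN N ^ twoStar N * (n : ℝ) ^ (-(2 * (N : ℝ)))
              * ((n : ℝ) ^ ((N : ℕ) : ℝ) * IG)
            = BubbleAux.AN N ^ twoStar N
              * ((n : ℝ) ^ (-(2 * (N : ℝ))) * (n : ℝ) ^ ((N : ℝ))) * IG from by push_cast; ring]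
          rw [← Real.rpow_add hn0R, show -(2 * (N : ℝ)) + (N : ℝ) = -(N : ℝ) from by ring]
  -- conclusion
  rw [hdec]
  rw [abs_le]
  constructor
  · nlinarith [mul_nonneg (mul_nonneg hAp.le ht.le) hIG0,
      mul_nonneg (mul_nonneg hAp.le ht.le) hV0]
  · nlinarith [mul_nonneg (mul_nonneg hAp.le ht.le) hIG0,
      mul_nonneg (mul_nonneg hAp.le ht.le) hV0]
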